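/- Let K be a finite field with q² elements and let n be a natural number. Then the set {(v, a) ∈ (Fin n → K) × K : a^q + a = Σ_{i} (v i)^(q+1)} has exactly q^(2n+1) elements. -/
import Mathlib

open Polynomial in
lemma card_eval_eq_zero_le {K : Type*} [Field K] [Fintype K] [DecidableEq K]
    (f : Polynomial K) (hf : f ≠ 0) :
    Nat.card {x : K // f.eval x = 0} ≤ f.natDegree := by
  rw [Nat.card_eq_fintype_card, Fintype.card_subtype]
  refine le_trans (Finset.card_le_card ?_)
    (le_trans (Multiset.toFinset_card_le _) (Polynomial.card_roots' f))
  intro x hx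
  simp only [Finset.mem_filter] at hx
  rw [Multiset.mem_toFinset, Polynomial.mem_roots hf]
  exact hx.2

/-- The unitary Heisenberg group `H_n(q)`, i.e. the set of pairs `(v, a)` with
`a^q + a = Σ_i (v i)^(q+1)` over a field with `q²` elements, has `q^(2n+1)` elements. -/
theorem card_unitary_heisenberg
    (q : ℕ) (hq : IsPrimePow q)
    (K : Type*) [Field K] [Fintype K] (hK : Fintype.card K = q ^ 2)
    (n : ℕ) :
    Nat.card {va : (Fin n → K) × K | va.2 ^ q + va.2 = ∑ i, (va.1 i) ^ (q + 1)}
      = q ^ (2 * n + 1) := by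
  classical
  obtain ⟨p, k, hp, hk, hpk⟩ := hq
  have hp : p.Prime := Nat.prime_iff.mpr hp
  have hq1 : 1 < q := by
    rw [← hpk]; exact Nat.one_lt_pow hk.ne' hp.one_lt
  have hq0 : q ≠ 0 := by omega
  -- characteristic
  haveI : Fact (ringChar K).Prime := ⟨CharP.char_is_prime K _⟩
  have hcharK : CharP K p := by
    have hdvd : ringChar K ∣ q ^ 2 := by
      rw [← hK]; exact (CharP.cast_eq_zero_iff K (ringChar K) _).mp (by
        exact_mod_cast FiniteField.cast_card_eq_zero K)
    have : ringChar K = p := by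
      have := (Fact.out : (ringChar K).Prime).dvd_of_dvd_pow
        (by rw [← hpk, ← pow_mul] at hdvd; exact hdvd)
      exact (Nat.prime_dvd_prime_iff_eq Fact.out hp).mp this
    rw [← this]; exact ringChar.charP K
  haveI := hcharK
  haveI : Fact p.Prime := ⟨hp⟩
  have hfrob : ∀ x y : K, (x + y) ^ q = x ^ q + y ^ q := by
    intro x y; rw [← hpk]; exact add_pow_char_pow ..
  have hcard2 : ∀ x : K, x ^ (q * q) = x := by
    intro x
    have := FiniteField.pow_card x
    rwa [hK, pow_two] at this
  -- the additive map T a = a^q + a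
  set T : K →+ K :=
    { toFun := fun a => a ^ q + a
      map_zero' := by simp [zero_pow hq0]
      map_add' := fun x y => by
        show (x + y) ^ q + (x + y) = (x ^ q + x) + (y ^ q + y)
        rw [hfrob]; ring } with hT
  have hTapp : ∀ a : K, T a = a ^ q + a := fun a => rfl
  -- image of T lands in the fixed set
  have hTfix : ∀ a : K, (T a) ^ q = T a := by
    intro a
    rw [hTapp, hfrob, ← pow_mul, hcard2, add_comm]
  -- kernel card bound
  have hkerle : Nat.card T.ker ≤ q := by
    have hdeg : (Polynomial.X ^ q + Polynomial.X : Polynomial K).degree = q := by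
      rw [Polynomial.degree_add_eq_left_of_degree_lt (by
        rw [Polynomial.degree_X_pow, Polynomial.degree_X]; exact_mod_cast hq1),
        Polynomial.degree_X_pow]
    have hne : (Polynomial.X ^ q + Polynomial.X : Polynomial K) ≠ 0 := by
      intro h; rw [h] at hdeg; simp at hdeg
    have := card_eval_eq_zero_le (Polynomial.X ^ q + Polynomial.X : Polynomial K) hne
    rw [Polynomial.natDegree_eq_of_degree_eq_some hdeg] at this
    refine le_trans (le_of_eq (Nat.card_congr (Equiv.subtypeEquivRight ?_))) this
    intro x
    simp [AddMonoidHom.mem_ker, hTapp]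
  -- range card bound
  have hfixle : Nat.card {x : K // x ^ q = x} ≤ q := by
    have hdeg : (Polynomial.X ^ q - Polynomial.X : Polynomial K).degree = q := by
      rw [sub_eq_add_neg, Polynomial.degree_add_eq_left_of_degree_lt (by
        rw [Polynomial.degree_X_pow, Polynomial.degree_neg, Polynomial.degree_X]
        exact_mod_cast hq1), Polynomial.degree_X_pow]
    have hne : (Polynomial.X ^ q - Polynomial.X : Polynomial K) ≠ 0 := by
      intro h; rw [h] at hdeg; simp at hdeg
    have := card_eval_eq_zero_le (Polynomial.X ^ q - Polynomial.X : Polynomial K) hne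
    rw [Polynomial.natDegree_eq_of_degree_eq_some hdeg] at this
    refine le_trans (le_of_eq (Nat.card_congr (Equiv.subtypeEquivRight ?_))) this
    intro x; simp [sub_eq_zero]
  have hrangele : Nat.card T.range ≤ Nat.card {x : K // x ^ q = x} :=
    Nat.card_le_card_of_injective
      (fun y => ⟨y.1, by obtain ⟨a, ha⟩ := y.2; rw [← ha]; exact hTfix a⟩)
      (fun a b h => by
        apply Subtype.ext
        have := congrArg Subtype.val h
        simpa using this)
  -- Lagrange
  have hlag : q ^ 2 = Nat.card T.range * Nat.card T.ker := by
    rw [← Nat.card_eq_fintype_card] at hK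
    rw [← hK, AddSubgroup.card_eq_card_quotient_mul_card_addSubgroup T.ker,
      Nat.card_congr (QuotientAddGroup.quotientKerEquivRange T).toEquiv]
  have hkerpos : 0 < Nat.card T.ker := Nat.card_pos
  have hrangepos : 0 < Nat.card T.range := Nat.card_pos
  have hkerq : Nat.card T.ker = q := by
    have h1 : q * q ≤ Nat.card T.range * Nat.card T.ker := by
      rw [← hlag, pow_two]
    have hR : Nat.card T.range ≤ q := le_trans hrangele hfixle
    have h2 : Nat.card T.range * Nat.card T.ker ≤ q * Nat.card T.ker :=
      Nat.mul_le_mul_right _ hR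
    have h3 : q ≤ Nat.card T.ker :=
      Nat.le_of_mul_le_mul_left (le_trans h1 h2) (by omega)
    omega
  have hrangeq : Nat.card T.range = q := by
    have h1 : q * q = Nat.card T.range * Nat.card T.ker := by rw [← hlag, pow_two]
    rw [hkerq] at h1
    exact Nat.eq_of_mul_eq_mul_right (by omega) h1.symm
  -- surjectivity onto fixed points
  have hsurj : ∀ c : K, c ^ q = c → ∃ a : K, T a = c := by
    intro c hc
    have hsub : (T.range : Set K) ⊆ {x : K | x ^ q = x} := by
      rintro x ⟨a, rfl⟩; exact hTfix a
    have heq : (T.range : Set K) = {x : K | x ^ q = x} := by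
      apply Set.eq_of_subset_of_ncard_le hsub
      rw [← Nat.card_coe_set_eq, ← Nat.card_coe_set_eq]
      have h2 : Nat.card {x : K | x ^ q = x} ≤ q := hfixle
      calc Nat.card ({x : K | x ^ q = x} : Set K) ≤ q := h2
        _ = Nat.card (T.range : Set K) := by
            rw [← hrangeq]; rfl
    have : c ∈ (T.range : Set K) := heq ▸ hc
    exact this
  -- fiber cardinality
  have hfiber : ∀ c : K, c ^ q = c → Nat.card {a : K // T a = c} = q := by
    intro c hc
    obtain ⟨a₀, ha₀⟩ := hsurj c hc
    have e : {a : K // T a = c} ≃ T.ker :=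
      { toFun := fun a => ⟨a.1 - a₀, by
          rw [AddMonoidHom.mem_ker, map_sub, a.2, ha₀, sub_self]⟩
        invFun := fun b => ⟨b.1 + a₀, by
          rw [map_add, ha₀, AddMonoidHom.mem_ker.mp b.2, zero_add]⟩
        left_inv := fun a => by simp
        right_inv := fun b => by simp }
    rw [Nat.card_congr e, hkerq]
  -- sum fixedness
  have hsumfix : ∀ v : Fin n → K, (∑ i, v i ^ (q + 1)) ^ q = ∑ i, v i ^ (q + 1) := by
    intro v
    set F : K →+ K :=
      { toFun := fun a => a ^ q
        map_zero' := zero_pow hq0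
        map_add' := hfrob } with hF
    have : (∑ i, v i ^ (q + 1)) ^ q = F (∑ i, v i ^ (q + 1)) := rfl
    rw [this, map_sum]
    refine Finset.sum_congr rfl fun i _ => ?_
    show (v i ^ (q + 1)) ^ q = v i ^ (q + 1)
    rw [← pow_mul]
    have : v i ^ ((q + 1) * q) = v i ^ (q * q) * v i ^ q := by
      rw [← pow_add]; ring_nf
    rw [this, hcard2, ← pow_succ']
  -- dissect the set
  have e : {va : (Fin n → K) × K | va.2 ^ q + va.2 = ∑ i, (va.1 i) ^ (q + 1)} ≃
      Σ v : Fin n → K, {a : K // a ^ q + a = ∑ i, v i ^ (q + 1)} :=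
    Equiv.subtypeProdEquivSigmaSubtype (fun (v : Fin n → K) (a : K) => a ^ q + a = ∑ i, v i ^ (q + 1))
  rw [Nat.card_congr e, Nat.card_eq_fintype_card, Fintype.card_sigma]
  have hfib : ∀ v : Fin n → K,
      Fintype.card {a : K // a ^ q + a = ∑ i, v i ^ (q + 1)} = q := by
    intro v
    rw [← Nat.card_eq_fintype_card]
    exact hfiber _ (hsumfix v)
  simp only [hfib]
  rw [Finset.sum_const, Finset.card_univ, Fintype.card_pi]
  simp only [Finset.prod_const, Finset.card_univ, Fintype.card_fin, hK, smul_eq_mul]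
  rw [← pow_mul, ← pow_succ]
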